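/- Let A and B be closed subsets of a Banach space X and let x̄ ∈ A ∩ B. Then A and B are transversal at x̄ if and only if there exist δ > 0 and κ > 0 such that for all a, b ∈ X with ‖a‖ ≤ δ and ‖b‖ ≤ δ, and all x ∈ (A − a) ∩ B_δ(x̄) and y ∈ (B − b) ∩ B_δ(x̄) with x ≠ y, the nonlocal slope satisfies |∇φ_{a,b}|◇(x, y) = sup_{(u,v) ≠ (x,y)} max{φ_{a,b}(x,y) − φ_{a,b}(u,v), 0} / ‖(x,y) − (u,v)‖ ≥ κ, where φ_{a,b} denotes the coupling function of the sets A − a and B − b. -/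

import Mathlib

open Metric Set
open scoped ENNReal

/-- Transversality of closed sets `A`, `B` at a point `x0 ∈ A ∩ B`: the subtransversality
inequality holds uniformly for all small translations of both sets. -/
def Transversal {X : Type*} [NormedAddCommGroup X] (A B : Set X) (x0 : X) : Prop :=
  ∃ K > 0, ∃ δ > 0, ∀ a ∈ Metric.ball (0 : X) δ, ∀ b ∈ Metric.ball (0 : X) δ,
    ∀ x ∈ Metric.ball x0 δ,
      EMetric.infEdist x (((· - a) '' A) ∩ ((· - b) '' B)) ≤
        ENNReal.ofReal K *
          (EMetric.infEdist x ((· - a) '' A) + EMetric.infEdist x ((· - b) '' B))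

/-- `setInd S x` is `0` if `x ∈ S` and `+∞` otherwise (indicator in `ℝ≥0∞`). -/
noncomputable def setInd {X : Type*} (S : Set X) (x : X) : ℝ≥0∞ :=
  ⨅ (_ : x ∈ S), 0

/-- The coupling function `φ(x,y) = δ_A(x) + d(x,y) + δ_B(y)` of the sets `A` and `B`. -/
noncomputable def coupling {X : Type*} [MetricSpace X] (A B : Set X) (p : X × X) : ℝ≥0∞ :=
  setInd A p.1 + ENNReal.ofReal (dist p.1 p.2) + setInd B p.2

/-- The nonlocal slope `|∇φ|◇(x,y)` of the coupling function of `A` and `B`,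
with `X × X` carrying the sum metric. -/
noncomputable def couplingNLSlope {X : Type*} [MetricSpace X] (A B : Set X) (x y : X) : ℝ≥0∞ :=
  ⨆ (p : X × X) (_ : p ≠ (x, y)),
    (coupling A B (x, y) - coupling A B p) / ENNReal.ofReal (dist x p.1 + dist y p.2)

/-- The (local) slope `|∇φ|(x,y)` of the coupling function of `A` and `B`,
with `X × X` carrying the sum metric. -/
noncomputable def couplingSlope {X : Type*} [MetricSpace X] (A B : Set X) (x y : X) : ℝ≥0∞ :=
  Filter.limsup
    (fun p : X × X =>
      (coupling A B (x, y) - coupling A B p) / ENNReal.ofReal (dist x p.1 + dist y p.2))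
    (nhdsWithin (x, y) {q | q ≠ (x, y)})

open Filter in
lemma setInd_of_mem {X : Type*} {S : Set X} {x : X} (h : x ∈ S) : setInd S x = 0 := by
  simp [setInd, h]

lemma setInd_mem_of_ne_top {X : Type*} {S : Set X} {x : X} (h : setInd S x ≠ ⊤) : x ∈ S := by
  by_contra hx
  simp [setInd, hx] at h

lemma coupling_of_mem {X : Type*} [MetricSpace X] {A B : Set X} {u v : X}
    (hu : u ∈ A) (hv : v ∈ B) : coupling A B (u, v) = ENNReal.ofReal (dist u v) := by
  simp [coupling, setInd_of_mem hu, setInd_of_mem hv]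

lemma exists_descent {X : Type*} [MetricSpace X] {A' B' : Set X} {u v : X}
    (hu : u ∈ A') (hv : v ∈ B') {κ κ' : ℝ} (hκ' : 0 < κ') (hlt : κ' < κ)
    (h : ENNReal.ofReal κ ≤ couplingNLSlope A' B' u v) :
    ∃ q : X × X, q.1 ∈ A' ∧ q.2 ∈ B' ∧
      dist q.1 q.2 + κ' * (dist u q.1 + dist v q.2) < dist u v := by
  have h1 : ENNReal.ofReal κ' < couplingNLSlope A' B' u v :=
    lt_of_lt_of_le ((ENNReal.ofReal_lt_ofReal_iff (hκ'.trans hlt)).2 hlt) h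
  rw [couplingNLSlope, lt_iSup_iff] at h1
  obtain ⟨p, hp⟩ := h1
  by_cases hpe : p = (u, v)
  · rw [hpe] at hp; simp at hp
  rw [iSup_pos hpe] at hp
  have hDq : 0 < dist u p.1 + dist v p.2 := by
    rcases lt_or_eq_of_le (add_nonneg dist_nonneg dist_nonneg :
        (0:ℝ) ≤ dist u p.1 + dist v p.2) with h' | h'
    · exact h'
    · exfalso
      have h1' : dist u p.1 = 0 := by
        nlinarith [dist_nonneg (x := u) (y := p.1), dist_nonneg (x := v) (y := p.2)]
      have h2' : dist v p.2 = 0 := by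
        nlinarith [dist_nonneg (x := u) (y := p.1), dist_nonneg (x := v) (y := p.2)]
      exact hpe (Prod.ext (dist_eq_zero.1 h1').symm (dist_eq_zero.1 h2').symm)
  rw [coupling_of_mem hu hv] at hp
  have hmul : ENNReal.ofReal κ' * ENNReal.ofReal (dist u p.1 + dist v p.2) <
      ENNReal.ofReal (dist u v) - coupling A' B' p :=
    (ENNReal.lt_div_iff_mul_lt (Or.inl (ENNReal.ofReal_pos.2 hDq).ne')
      (Or.inl ENNReal.ofReal_ne_top)).1 hp
  have hclt : coupling A' B' p < ENNReal.ofReal (dist u v) := by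
    by_contra hc
    push_neg at hc
    rw [tsub_eq_zero_of_le hc] at hmul
    exact absurd hmul (by simp)
  have hpt : coupling A' B' p ≠ ⊤ := ne_top_of_lt (hclt.trans_le le_top)
  have hp1 : p.1 ∈ A' := by
    apply setInd_mem_of_ne_top
    intro ht
    exact hpt (by simp [coupling, ht])
  have hp2 : p.2 ∈ B' := by
    apply setInd_mem_of_ne_top
    intro ht
    exact hpt (by simp [coupling, ht])
  have hcoup : coupling A' B' p = ENNReal.ofReal (dist p.1 p.2) := by
    rcases p with ⟨p1, p2⟩; exact coupling_of_mem hp1 hp2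
  rw [hcoup, ← ENNReal.ofReal_sub _ dist_nonneg, ← ENNReal.ofReal_mul hκ'.le] at hmul
  have hfin : κ' * (dist u p.1 + dist v p.2) < dist u v - dist p.1 p.2 :=
    (ENNReal.ofReal_lt_ofReal_iff_of_nonneg (by positivity)).1 hmul
  exact ⟨p, hp1, hp2, by linarith⟩

open Filter in
lemma ekeland_coupling {X : Type*} [NormedAddCommGroup X] [CompleteSpace X]
    {A' B' : Set X} (hA : IsClosed A') (hB : IsClosed B')
    {κ' : ℝ} (hκ' : 0 < κ') {x1 y1 : X} (hx1 : x1 ∈ A') (hy1 : y1 ∈ B')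
    (H : ∀ u ∈ A', ∀ v ∈ B', u ≠ v →
      dist u x1 + dist v y1 ≤ dist x1 y1 / κ' →
      ∃ q : X × X, q.1 ∈ A' ∧ q.2 ∈ B' ∧
        dist q.1 q.2 + κ' * (dist u q.1 + dist v q.2) < dist u v) :
    ∃ w, w ∈ A' ∧ w ∈ B' ∧ dist x1 w + dist y1 w ≤ dist x1 y1 / κ' := by
  classical
  set φ : X × X → ℝ := fun p => dist p.1 p.2 with hφ
  set D : X × X → X × X → ℝ := fun p q => dist p.1 q.1 + dist p.2 q.2 with hD
  set S : X × X → Set (X × X) :=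
    fun p => {q | q.1 ∈ A' ∧ q.2 ∈ B' ∧ φ q + κ' * D p q ≤ φ p} with hS
  have hstep : ∀ (n : ℕ) (p : {p : X × X // p.1 ∈ A' ∧ p.2 ∈ B'}),
      ∃ q : {q : X × X // q.1 ∈ A' ∧ q.2 ∈ B'},
        (q : X × X) ∈ S (p : X × X) ∧
          ∀ q' ∈ S (p : X × X), φ (q : X × X) ≤ φ q' + (1/2 : ℝ)^n := by
    intro n p
    have hpS : (p : X × X) ∈ S (p : X × X) := ⟨p.2.1, p.2.2, by simp [hφ, hD]⟩
    have hne : (φ '' S (p : X × X)).Nonempty := ⟨φ p, mem_image_of_mem _ hpS⟩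
    have hbdd : BddBelow (φ '' S (p : X × X)) := by
      refine ⟨0, ?_⟩
      rintro _ ⟨q, _, rfl⟩
      exact dist_nonneg
    obtain ⟨r, ⟨q, hqS, rfl⟩, hr⟩ := exists_lt_of_csInf_lt hne
      (lt_add_of_pos_right _ (by positivity : (0:ℝ) < (1/2:ℝ)^n))
    exact ⟨⟨q, hqS.1, hqS.2.1⟩, hqS, fun q' hq' => le_trans hr.le
      (add_le_add (csInf_le hbdd (mem_image_of_mem _ hq')) le_rfl)⟩
  choose next hnextS hnextMin using hstep
  set g : ℕ → {p : X × X // p.1 ∈ A' ∧ p.2 ∈ B'} :=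
    fun n => Nat.rec ⟨(x1, y1), hx1, hy1⟩ (fun n p => next n p) n with hg
  set f : ℕ → X × X := fun n => (g n : X × X) with hf
  have hf0 : f 0 = (x1, y1) := rfl
  have hfA : ∀ n, (f n).1 ∈ A' := fun n => (g n).2.1
  have hfB : ∀ n, (f n).2 ∈ B' := fun n => (g n).2.2
  have hfS : ∀ n, f (n+1) ∈ S (f n) := fun n => hnextS n (g n)
  have hfMin : ∀ n, ∀ q' ∈ S (f n), φ (f (n+1)) ≤ φ q' + (1/2:ℝ)^n :=
    fun n => hnextMin n (g n)
  have hDnonneg : ∀ p q : X × X, 0 ≤ D p q := fun p q => add_nonneg dist_nonneg dist_nonneg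
  have hφnonneg : ∀ p : X × X, 0 ≤ φ p := fun p => dist_nonneg
  have hanti : ∀ n m, n ≤ m → φ (f m) + κ' * D (f n) (f m) ≤ φ (f n) := by
    intro n m hnm
    induction m, hnm using Nat.le_induction with
    | base => simp [hφ, hD]
    | succ m hnm ih =>
      have h1 := (hfS m).2.2
      have h2 : D (f n) (f (m+1)) ≤ D (f n) (f m) + D (f m) (f (m+1)) := by
        simp only [hD]
        have t1 := dist_triangle (f n).1 (f m).1 (f (m+1)).1
        have t2 := dist_triangle (f n).2 (f m).2 (f (m+1)).2
        linarith
      have h3 : κ' * D (f n) (f (m+1)) ≤ κ' * D (f n) (f m) + κ' * D (f m) (f (m+1)) := by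
        rw [← mul_add]
        exact mul_le_mul_of_nonneg_left h2 hκ'.le
      linarith
  have hmono : ∀ n m, n ≤ m → φ (f m) ≤ φ (f n) := by
    intro n m hnm
    have h1 := hanti n m hnm
    nlinarith [hDnonneg (f n) (f m)]
  have hbddr : BddBelow (Set.range fun n => φ (f n)) := by
    refine ⟨0, ?_⟩
    rintro _ ⟨n, rfl⟩
    exact hφnonneg _
  set L : ℝ := ⨅ n, φ (f n) with hLdef
  have hLtend : Tendsto (fun n => φ (f n)) atTop (nhds L) :=
    tendsto_atTop_ciInf (fun n m hnm => hmono n m hnm) hbddr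
  have hLle : ∀ n, L ≤ φ (f n) := fun n => ciInf_le hbddr n
  have hL0 : 0 ≤ L := le_ciInf fun n => hφnonneg _
  have hcauchy : ∀ (π : X × X → X), (∀ p q, dist (π p) (π q) ≤ D p q) →
      CauchySeq (fun n => π (f n)) := by
    intro π hπ
    have key : ∀ n m N : ℕ, N ≤ n → n ≤ m → dist (π (f n)) (π (f m)) ≤ (φ (f N) - L) / κ' := by
      intro n m N hN hnm
      have h1 := hanti n m hnm
      have h2 := hπ (f n) (f m)
      have h3 := hmono N n hN
      have h4 := hLle m
      rw [le_div_iff₀ hκ']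
      nlinarith
    apply cauchySeq_of_le_tendsto_0 (fun N => (φ (f N) - L) / κ')
    · intro n m N hn hm
      rcases le_total n m with h | h
      · exact key n m N hn h
      · rw [dist_comm]
        exact key m n N hm h
    · have h5 : Tendsto (fun N => (φ (f N) - L) / κ') atTop (nhds ((L - L) / κ')) :=
        (hLtend.sub_const L).div_const κ'
      simpa using h5
  have hpi1 : ∀ p q : X × X, dist p.1 q.1 ≤ D p q := by
    intro p q
    simp only [hD]
    exact le_add_of_nonneg_right dist_nonneg
  have hpi2 : ∀ p q : X × X, dist p.2 q.2 ≤ D p q := by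
    intro p q
    simp only [hD]
    exact le_add_of_nonneg_left dist_nonneg
  obtain ⟨u, hu⟩ := cauchySeq_tendsto_of_complete (hcauchy Prod.fst hpi1)
  obtain ⟨v, hv⟩ := cauchySeq_tendsto_of_complete (hcauchy Prod.snd hpi2)
  have hdtend : Tendsto (fun n => φ (f n)) atTop (nhds (dist u v)) := by
    simpa [hφ] using hu.dist hv
  have hdistuv : dist u v = L := tendsto_nhds_unique hdtend hLtend
  have huA : u ∈ A' := hA.mem_of_tendsto hu (Eventually.of_forall hfA)
  have hvB : v ∈ B' := hB.mem_of_tendsto hv (Eventually.of_forall hfB)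
  have claim1 : ∀ n, L + κ' * D (f n) (u, v) ≤ φ (f n) := by
    intro n
    have htend : Tendsto (fun m => φ (f m) + κ' * D (f n) (f m)) atTop
        (nhds (L + κ' * D (f n) (u, v))) := by
      refine hLtend.add (Tendsto.const_mul _ ?_)
      have h1 : Tendsto (fun m => dist (f n).1 (f m).1) atTop (nhds (dist (f n).1 u)) :=
        tendsto_const_nhds.dist hu
      have h2 : Tendsto (fun m => dist (f n).2 (f m).2) atTop (nhds (dist (f n).2 v)) :=
        tendsto_const_nhds.dist hv
      simpa [hD] using h1.add h2
    exact le_of_tendsto htend (eventually_atTop.2 ⟨n, fun m hm => hanti n m hm⟩)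
  have hbound : dist u x1 + dist v y1 ≤ dist x1 y1 / κ' := by
    rw [dist_comm u x1, dist_comm v y1]
    have h0 := claim1 0
    rw [hf0] at h0
    simp only [hφ, hD] at h0
    rw [le_div_iff₀ hκ']
    nlinarith
  by_cases huvne : u = v
  · subst huvne
    refine ⟨u, huA, hvB, ?_⟩
    rw [dist_comm x1 u, dist_comm y1 u]
    exact hbound
  · exfalso
    obtain ⟨q, hq1, hq2, hqlt⟩ := H u huA v hvB huvne hbound
    have hqlt' : φ q + κ' * D (u, v) q < L := by
      rw [← hdistuv]
      simpa [hφ, hD] using hqlt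
    have hqS : ∀ n, q ∈ S (f n) := by
      intro n
      refine ⟨hq1, hq2, ?_⟩
      have hc1 := claim1 n
      have htri : D (f n) q ≤ D (f n) (u, v) + D (u, v) q := by
        simp only [hD]
        have t1 := dist_triangle (f n).1 u q.1
        have t2 := dist_triangle (f n).2 v q.2
        linarith
      have e1 : κ' * D (f n) q ≤ κ' * D (f n) (u, v) + κ' * D (u, v) q := by
        rw [← mul_add]
        exact mul_le_mul_of_nonneg_left htri hκ'.le
      linarith
    have hgeL : L ≤ φ q := by
      have h1 : ∀ n, φ (f (n+1)) ≤ φ q + (1/2:ℝ)^n := fun n => hfMin n q (hqS n)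
      have h2 : Tendsto (fun n => φ (f (n+1))) atTop (nhds L) := by
        have := hLtend.comp (tendsto_add_atTop_nat 1)
        exact this
      have h3 : Tendsto (fun n : ℕ => φ q + (1/2:ℝ)^n) atTop (nhds (φ q + 0)) :=
        tendsto_const_nhds.add
          (tendsto_pow_atTop_nhds_zero_of_lt_one (by norm_num) (by norm_num))
      have h4 := le_of_tendsto_of_tendsto' h2 h3 h1
      simpa using h4
    nlinarith [hDnonneg (u, v) q]

theorem stmt9 {X : Type*} [NormedAddCommGroup X] [NormedSpace ℝ X] [CompleteSpace X]
    {A B : Set X} (hA : IsClosed A) (hB : IsClosed B) {xbar : X} (hx : xbar ∈ A ∩ B) :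
    Transversal A B xbar ↔
      ∃ δ > 0, ∃ κ > 0, ∀ a b : X, ‖a‖ ≤ δ → ‖b‖ ≤ δ →
        ∀ x ∈ ((· - a) '' A) ∩ Metric.ball xbar δ,
          ∀ y ∈ ((· - b) '' B) ∩ Metric.ball xbar δ, x ≠ y →
            ENNReal.ofReal κ ≤ couplingNLSlope ((· - a) '' A) ((· - b) '' B) x y := by
  constructor
  · rintro ⟨K, hK, δ, hδ, hTr⟩
    refine ⟨δ/2, by linarith, 1/(2*K+3), by positivity, ?_⟩
    intro a b ha hb x hxm y hym hxy
    obtain ⟨hxA, hxb⟩ := hxm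
    obtain ⟨hyB, hyb⟩ := hym
    have haδ : a ∈ Metric.ball (0:X) δ := by
      rw [mem_ball_zero_iff]; linarith
    have hbδ : b ∈ Metric.ball (0:X) δ := by
      rw [mem_ball_zero_iff]; linarith
    have hxδ : x ∈ Metric.ball xbar δ := ball_subset_ball (by linarith) hxb
    have h1 := hTr a haδ b hbδ x hxδ
    have hd : 0 < dist x y := dist_pos.2 hxy
    have h2 : EMetric.infEdist x (((· - a) '' A) ∩ ((· - b) '' B)) <
        ENNReal.ofReal ((K+1) * dist x y) := by
      calc EMetric.infEdist x (((· - a) '' A) ∩ ((· - b) '' B))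
          ≤ ENNReal.ofReal K * (EMetric.infEdist x ((· - a) '' A) +
              EMetric.infEdist x ((· - b) '' B)) := h1
        _ = ENNReal.ofReal K * EMetric.infEdist x ((· - b) '' B) := by
            rw [show EMetric.infEdist x ((· - a) '' A) = 0 from EMetric.infEdist_zero_of_mem hxA, zero_add]
        _ ≤ ENNReal.ofReal K * ENNReal.ofReal (dist x y) := by
            gcongr
            calc EMetric.infEdist x ((· - b) '' B) ≤ edist x y :=
                  EMetric.infEdist_le_edist_of_mem hyB
              _ = ENNReal.ofReal (dist x y) := edist_dist _ _
        _ = ENNReal.ofReal (K * dist x y) := (ENNReal.ofReal_mul hK.le).symm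
        _ < ENNReal.ofReal ((K+1) * dist x y) := by
            apply (ENNReal.ofReal_lt_ofReal_iff (by positivity)).2
            nlinarith
    obtain ⟨w, hw, hwd⟩ := EMetric.infEdist_lt_iff.mp h2
    have hwd' : dist x w < (K+1) * dist x y := by
      rw [edist_dist] at hwd
      exact (ENNReal.ofReal_lt_ofReal_iff_of_nonneg dist_nonneg).1 hwd
    rw [couplingNLSlope]
    have hne : ((w, w) : X × X) ≠ (x, y) := by
      intro h
      rw [Prod.ext_iff] at h
      exact hxy (h.1.symm.trans h.2)
    refine le_trans ?_ (le_iSup₂ (w, w) hne)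
    rw [coupling_of_mem hxA hyB, coupling_of_mem hw.1 hw.2, dist_self,
      ENNReal.ofReal_zero, tsub_zero]
    have hDwpos : 0 < dist x w + dist y w := by
      rcases lt_or_eq_of_le (add_nonneg dist_nonneg dist_nonneg :
          (0:ℝ) ≤ dist x w + dist y w) with h' | h'
      · exact h'
      · exfalso
        have h1' : dist x w = 0 := by
          nlinarith [dist_nonneg (x := x) (y := w), dist_nonneg (x := y) (y := w)]
        have h2' : dist y w = 0 := by
          nlinarith [dist_nonneg (x := x) (y := w), dist_nonneg (x := y) (y := w)]
        exact hxy ((dist_eq_zero.1 h1').trans (dist_eq_zero.1 h2').symm)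
    rw [ENNReal.le_div_iff_mul_le (Or.inl (ENNReal.ofReal_pos.2 hDwpos).ne')
      (Or.inl ENNReal.ofReal_ne_top), ← ENNReal.ofReal_mul (by positivity)]
    apply ENNReal.ofReal_le_ofReal
    have hDwle : dist x w + dist y w < (2*K+3) * dist x y := by
      have t1 := dist_triangle y x w
      have t2 : dist y x = dist x y := dist_comm y x
      linarith
    calc 1/(2*K+3) * (dist x w + dist y w)
        ≤ 1/(2*K+3) * ((2*K+3) * dist x y) := by
          apply mul_le_mul_of_nonneg_left hDwle.le (by positivity)
      _ = dist x y := by field_simp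
  · rintro ⟨δ, hδ, κ, hκ, Hs⟩
    set κ' : ℝ := κ / 2 with hκ'def
    have hκ' : 0 < κ' := by positivity
    have hκ'κ : κ' < κ := by rw [hκ'def]; linarith
    obtain ⟨δ₀, hδ₀, hδ₀δ, hδ₀key⟩ :
        ∃ δ₀ > 0, δ₀ ≤ δ ∧ 6*δ₀/κ' + 4*δ₀ ≤ δ := by
      refine ⟨δ * κ' / (12 + 8 * κ'), by positivity, ?_, ?_⟩
      · rw [div_le_iff₀ (by positivity)]
        nlinarith
      · have h12 : (0:ℝ) < 12 + 8 * κ' := by positivity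
        have hid : 6*(δ * κ' / (12 + 8 * κ'))/κ' + 4*(δ * κ' / (12 + 8 * κ'))
            = δ*(6+4*κ')/(12+8*κ') := by
          field_simp
        rw [hid, div_le_iff₀ h12]
        nlinarith
    refine ⟨1 + 1/κ', by positivity, δ₀, hδ₀, ?_⟩
    intro a ha b hb x hxball
    have haδ : ‖a‖ ≤ δ := le_trans (mem_ball_zero_iff.1 ha).le hδ₀δ
    have hbδ : ‖b‖ ≤ δ := le_trans (mem_ball_zero_iff.1 hb).le hδ₀δ
    have hA'c : IsClosed ((· - a) '' A) := by
      have himg : (· - a) '' A = (· + a) ⁻¹' A := by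
        ext z
        simp only [Set.mem_image, Set.mem_preimage]
        constructor
        · rintro ⟨u, hu, rfl⟩
          simpa [sub_add_cancel] using hu
        · intro h
          exact ⟨z + a, h, by abel⟩
      rw [himg]
      exact hA.preimage (continuous_id.add continuous_const)
    have hB'c : IsClosed ((· - b) '' B) := by
      have himg : (· - b) '' B = (· + b) ⁻¹' B := by
        ext z
        simp only [Set.mem_image, Set.mem_preimage]
        constructor
        · rintro ⟨u, hu, rfl⟩
          simpa [sub_add_cancel] using hu
        · intro h
          exact ⟨z + b, h, by abel⟩
      rw [himg]
      exact hB.preimage (continuous_id.add continuous_const)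
    have hxbarA : xbar - a ∈ (· - a) '' A := ⟨xbar, hx.1, rfl⟩
    have hxbarB : xbar - b ∈ (· - b) '' B := ⟨xbar, hx.2, rfl⟩
    have hA'ne : ((· - a) '' A).Nonempty := ⟨_, hxbarA⟩
    have hB'ne : ((· - b) '' B).Nonempty := ⟨_, hxbarB⟩
    set dA := Metric.infDist x ((· - a) '' A) with hdAdef
    set dB := Metric.infDist x ((· - b) '' B) with hdBdef
    have hdA0 : 0 ≤ dA := Metric.infDist_nonneg
    have hdB0 : 0 ≤ dB := Metric.infDist_nonneg
    have hxxbar : dist x xbar < δ₀ := mem_ball.1 hxball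
    have hdAlt : dA < 2 * δ₀ := by
      have h1 : dA ≤ dist x (xbar - a) := Metric.infDist_le_dist_of_mem hxbarA
      have h2 : dist x (xbar - a) ≤ dist x xbar + dist xbar (xbar - a) := dist_triangle _ _ _
      have h3 : dist xbar (xbar - a) = ‖a‖ := by
        rw [dist_eq_norm]; congr 1; abel
      have h5 : ‖a‖ < δ₀ := mem_ball_zero_iff.1 ha
      linarith
    have hdBlt : dB < 2 * δ₀ := by
      have h1 : dB ≤ dist x (xbar - b) := Metric.infDist_le_dist_of_mem hxbarB
      have h2 : dist x (xbar - b) ≤ dist x xbar + dist xbar (xbar - b) := dist_triangle _ _ _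
      have h3 : dist xbar (xbar - b) = ‖b‖ := by
        rw [dist_eq_norm]; congr 1; abel
      have h5 : ‖b‖ < δ₀ := mem_ball_zero_iff.1 hb
      linarith
    have hEA : EMetric.infEdist x ((· - a) '' A) = ENNReal.ofReal dA := by
      rw [hdAdef, Metric.infDist, ENNReal.ofReal_toReal]
      rfl
      exact ((EMetric.infEdist_le_edist_of_mem hxbarA).trans_lt (edist_lt_top _ _)).ne
    have hEB : EMetric.infEdist x ((· - b) '' B) = ENNReal.ofReal dB := by
      rw [hdBdef, Metric.infDist, ENNReal.ofReal_toReal]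
      rfl
      exact ((EMetric.infEdist_le_edist_of_mem hxbarB).trans_lt (edist_lt_top _ _)).ne
    rw [hEA, hEB, ← ENNReal.ofReal_add hdA0 hdB0, ← ENNReal.ofReal_mul (by positivity)]
    apply ENNReal.le_of_forall_pos_le_add
    intro ε hε _
    have hεr : (0:ℝ) < (ε : ℝ) := hε
    set ε₀ : ℝ := min δ₀ ((ε : ℝ) * κ' / (2 * (κ' + 2))) with hε₀def
    have hε₀ : 0 < ε₀ := lt_min hδ₀ (by positivity)
    have hε₀δ₀ : ε₀ ≤ δ₀ := min_le_left _ _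
    obtain ⟨x1, hx1A, hx1d⟩ := (Metric.infDist_lt_iff hA'ne).1
      (lt_add_of_pos_right dA hε₀ : Metric.infDist x ((· - a) '' A) < dA + ε₀)
    obtain ⟨y1, hy1B, hy1d⟩ := (Metric.infDist_lt_iff hB'ne).1
      (lt_add_of_pos_right dB hε₀ : Metric.infDist x ((· - b) '' B) < dB + ε₀)
    have hrle : dist x1 y1 ≤ dA + dB + 2*ε₀ := by
      have t1 := dist_triangle x1 x y1
      have t2 : dist x1 x = dist x x1 := dist_comm x1 x
      linarith
    have hrlt6 : dist x1 y1 < 6*δ₀ := by linarith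
    have Hek : ∀ u ∈ (· - a) '' A, ∀ v ∈ (· - b) '' B, u ≠ v →
        dist u x1 + dist v y1 ≤ dist x1 y1 / κ' →
        ∃ q : X × X, q.1 ∈ (· - a) '' A ∧ q.2 ∈ (· - b) '' B ∧
          dist q.1 q.2 + κ' * (dist u q.1 + dist v q.2) < dist u v := by
      intro u hu v hv huv hguard
      have hrdiv : dist x1 y1 / κ' ≤ 6*δ₀/κ' := by gcongr
      have hux : dist u x1 ≤ 6*δ₀/κ' :=
        le_trans (le_trans (le_add_of_nonneg_right dist_nonneg) hguard) hrdiv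
      have hvy : dist v y1 ≤ 6*δ₀/κ' :=
        le_trans (le_trans (le_add_of_nonneg_left dist_nonneg) hguard) hrdiv
      have hubar : u ∈ Metric.ball xbar δ := by
        rw [mem_ball]
        have t1 : dist u xbar ≤ dist u x1 + dist x1 x + dist x xbar := dist_triangle4 _ _ _ _
        have t2 : dist x1 x < dA + ε₀ := by rw [dist_comm]; exact hx1d
        have hds : (0:ℝ) < 6*δ₀/κ' := by positivity
        nlinarith
      have hvbar : v ∈ Metric.ball xbar δ := by
        rw [mem_ball]
        have t1 : dist v xbar ≤ dist v y1 + dist y1 x + dist x xbar := dist_triangle4 _ _ _ _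
        have t2 : dist y1 x < dB + ε₀ := by rw [dist_comm]; exact hy1d
        have hds : (0:ℝ) < 6*δ₀/κ' := by positivity
        nlinarith
      have hslope := Hs a b haδ hbδ u ⟨hu, hubar⟩ v ⟨hv, hvbar⟩ huv
      exact exists_descent hu hv hκ' hκ'κ hslope
    obtain ⟨w, hwA, hwB, hwd⟩ := ekeland_coupling hA'c hB'c hκ' hx1A hy1B Hek
    have ht4 : ε₀ * (1 + 2/κ') ≤ (ε : ℝ) := by
      have h1 : ε₀ ≤ (ε : ℝ) * κ' / (2 * (κ' + 2)) := min_le_right _ _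
      calc ε₀ * (1 + 2/κ') ≤ ((ε : ℝ) * κ' / (2 * (κ' + 2))) * (1 + 2/κ') :=
            mul_le_mul_of_nonneg_right h1 (by positivity)
        _ = (ε : ℝ) / 2 := by field_simp
        _ ≤ (ε : ℝ) := by linarith
    have hxw : dist x w ≤ (1 + 1/κ') * (dA + dB) + (ε : ℝ) := by
      have t1 : dist x w ≤ dist x x1 + dist x1 w := dist_triangle _ _ _
      have t2 : dist x1 w ≤ dist x1 y1 / κ' :=
        le_trans (le_add_of_nonneg_right dist_nonneg) hwd
      have t3 : dist x1 y1 / κ' ≤ (dA + dB + 2*ε₀) / κ' := by gcongr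
      have e1 : (dA + dB + 2*ε₀) / κ' = (dA + dB) / κ' + 2*ε₀/κ' := by ring
      have e2 : (1 + 1/κ') * (dA + dB) = (dA + dB) + (dA + dB)/κ' := by ring
      have e3 : ε₀ * (1 + 2/κ') = ε₀ + 2*ε₀/κ' := by ring
      linarith
    calc EMetric.infEdist x (((· - a) '' A) ∩ ((· - b) '' B))
        ≤ edist x w := EMetric.infEdist_le_edist_of_mem ⟨hwA, hwB⟩
      _ = ENNReal.ofReal (dist x w) := edist_dist _ _
      _ ≤ ENNReal.ofReal ((1 + 1/κ') * (dA + dB) + (ε : ℝ)) := ENNReal.ofReal_le_ofReal hxw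
      _ ≤ ENNReal.ofReal ((1 + 1/κ') * (dA + dB)) + ENNReal.ofReal ((ε : ℝ)) :=
          ENNReal.ofReal_add_le
      _ = ENNReal.ofReal ((1 + 1/κ') * (dA + dB)) + (ε : ℝ≥0∞) := by
          rw [ENNReal.ofReal_coe_nnreal]
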